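/- Let A_{−1} = X, A_{0} = Y, A_{+1} = Z be the 2×2 Pauli matrices over ℂ. For n ≥ 1 define the unary-encoded AKLT amplitude function Ψ_n : {0,1}^{3n} → ℂ as follows: if for every j ∈ {1,…,n} the triple (v_{3j−2}, v_{3j−1}, v_{3j}) has exactly one entry equal to 1, let a_j = −1, 0, or +1 according to whether the first, second, or third entry of the j-th triple is 1, and set Ψ_n(v) = Tr(A_{a_1} A_{a_2} ⋯ A_{a_n}); otherwise set Ψ_n(v) = 0. Then there exists a constant C ∈ ℕ, independent of n, such that for all n ≥ 1, Ψ_n is exactly representable by an RBM with at most C·n hidden neurons. -/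

import Mathlib

open Complex Matrix

/-- A function `f : {0,1}^n → ℂ` is exactly representable by a restricted Boltzmann machine
with `m` hidden neurons if there are complex parameters `a i`, `b j`, `W i j` and a nonzero
constant `C` with
`f v = C · exp(∑ i, a i v i) · ∏ j, (1 + exp(b j + ∑ i, W i j v i))` for all `v ∈ {0,1}^n`. -/
def RBMRepresentable (n m : ℕ) (f : (Fin n → Bool) → ℂ) : Prop :=
  ∃ (C : ℂ) (a : Fin n → ℂ) (b : Fin m → ℂ) (W : Fin n → Fin m → ℂ),
    C ≠ 0 ∧ ∀ v : Fin n → Bool,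
      f v = C * Complex.exp (∑ i, a i * (if v i then 1 else 0)) *
        ∏ j, (1 + Complex.exp (b j + ∑ i, W i j * (if v i then 1 else 0)))

/-- The Pauli matrix `X = A_{−1}`. -/
def pauliX : Matrix (Fin 2) (Fin 2) ℂ := !![0, 1; 1, 0]

/-- The Pauli matrix `Y = A_{0}`. -/
noncomputable def pauliY : Matrix (Fin 2) (Fin 2) ℂ := !![0, -Complex.I; Complex.I, 0]

/-- The Pauli matrix `Z = A_{+1}`. -/
def pauliZ : Matrix (Fin 2) (Fin 2) ℂ := !![1, 0; 0, -1]

/-- The matrix `A_{a_j}` assigned to a unary-encoded triple `(b0, b1, b2)` of Hamming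
weight one: `(1,0,0) ↦ A_{−1} = X`, `(0,1,0) ↦ A_{0} = Y`, `(0,0,1) ↦ A_{+1} = Z`. -/
noncomputable def akltMat (b0 b1 b2 : Bool) : Matrix (Fin 2) (Fin 2) ℂ :=
  if b0 then pauliX else if b1 then pauliY else pauliZ

/-- The unary-encoded AKLT amplitude function on `3n` binary neurons: if every consecutive
triple `(v_{3j}, v_{3j+1}, v_{3j+2})` has exactly one entry equal to `1`, it is the trace of
the ordered product `A_{a_1} A_{a_2} ⋯ A_{a_n}` of the corresponding Pauli matrices, and it
vanishes otherwise. -/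
noncomputable def akltAmp (n : ℕ) (v : Fin (3 * n) → Bool) : ℂ :=
  if ∀ j : Fin n,
      ((if v ⟨3 * j.1, by have := j.2; omega⟩ then 1 else 0) +
        (if v ⟨3 * j.1 + 1, by have := j.2; omega⟩ then 1 else 0) +
        (if v ⟨3 * j.1 + 2, by have := j.2; omega⟩ then 1 else 0) : ℕ) = 1 then
    Matrix.trace
      (((List.finRange n).map fun j =>
        akltMat (v ⟨3 * j.1, by have := j.2; omega⟩)
          (v ⟨3 * j.1 + 1, by have := j.2; omega⟩)
          (v ⟨3 * j.1 + 2, by have := j.2; omega⟩)).prod)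
  else 0

namespace AKLTaux
noncomputable section
open Finset

def L2 : ℂ := (Real.log 2 : ℂ)
def PIC : ℂ := Real.pi * Complex.I

lemma exp_L2 : Complex.exp L2 = 2 := by
  rw [L2, ← Complex.ofReal_exp, Real.exp_log (by norm_num)]; norm_num

lemma exp_PIC : Complex.exp PIC = -1 := by rw [PIC]; exact_mod_cast Complex.exp_pi_mul_I

lemma exp_nat (c : ℂ) (m : ℕ) : Complex.exp (c * m) = Complex.exp c ^ m := by
  rw [mul_comm, Complex.exp_nat_mul]

lemma exp_L2_nat (m : ℕ) : Complex.exp (L2 * m) = 2 ^ m := by rw [exp_nat, exp_L2]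
lemma exp_PIC_nat (m : ℕ) : Complex.exp (PIC * m) = (-1) ^ m := by rw [exp_nat, exp_PIC]

lemma exp_half_PIC : Complex.exp (PIC / 2) = Complex.I := by
  have : PIC / 2 = (↑(Real.pi / 2) : ℂ) * Complex.I := by
    rw [PIC]; push_cast; ring
  rw [this, Complex.exp_mul_I, ← Complex.ofReal_cos, ← Complex.ofReal_sin]
  simp [Real.cos_pi_div_two, Real.sin_pi_div_two]

lemma XX : pauliX * pauliX = 1 := by
  ext i j; fin_cases i <;> fin_cases j <;>
    simp [pauliX, Matrix.mul_apply, Fin.sum_univ_two]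

lemma ZZ : pauliZ * pauliZ = 1 := by
  ext i j; fin_cases i <;> fin_cases j <;>
    simp [pauliZ, Matrix.mul_apply, Fin.sum_univ_two]

lemma ZX : pauliZ * pauliX = (-1 : ℂ) • (pauliX * pauliZ) := by
  ext i j; fin_cases i <;> fin_cases j <;>
    simp [pauliX, pauliZ, Matrix.mul_apply, Fin.sum_univ_two]

lemma Y_eq : pauliY = Complex.I • (pauliX * pauliZ) := by
  ext i j; fin_cases i <;> fin_cases j <;>
    simp [pauliX, pauliZ, pauliY, Matrix.mul_apply, Fin.sum_univ_two]

lemma Z_Xpow (b : ℕ) : pauliZ * pauliX ^ b = ((-1 : ℂ) ^ b) • (pauliX ^ b * pauliZ) := by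
  induction b with
  | zero => simp
  | succ b ih =>
      calc pauliZ * pauliX ^ (b+1) = (pauliZ * pauliX ^ b) * pauliX := by
            rw [pow_succ, mul_assoc]
        _ = ((-1:ℂ)^b • (pauliX^b * pauliZ)) * pauliX := by rw [ih]
        _ = (-1:ℂ)^b • (pauliX^b * (pauliZ * pauliX)) := by rw [smul_mul_assoc, mul_assoc]
        _ = (-1:ℂ)^b • (pauliX^b * ((-1:ℂ) • (pauliX * pauliZ))) := by rw [ZX]
        _ = ((-1:ℂ)^(b+1)) • (pauliX^(b+1) * pauliZ) := by
            rw [mul_smul_comm, smul_smul, ← pow_succ]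
            congr 1
            rw [← mul_assoc, ← pow_succ]

lemma Zpow_Xpow (a b : ℕ) :
    pauliZ ^ a * pauliX ^ b = ((-1 : ℂ) ^ (a * b)) • (pauliX ^ b * pauliZ ^ a) := by
  induction a with
  | zero => simp
  | succ a ih =>
      calc pauliZ ^ (a+1) * pauliX ^ b = pauliZ^a * (pauliZ * pauliX^b) := by
            rw [pow_succ, mul_assoc]
        _ = pauliZ^a * ((-1:ℂ)^b • (pauliX^b * pauliZ)) := by rw [Z_Xpow]
        _ = (-1:ℂ)^b • ((pauliZ^a * pauliX^b) * pauliZ) := by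
            rw [mul_smul_comm, mul_assoc]
        _ = (-1:ℂ)^b • (((-1:ℂ)^(a*b) • (pauliX^b * pauliZ^a)) * pauliZ) := by rw [ih]
        _ = ((-1:ℂ)^((a+1)*b)) • (pauliX^b * pauliZ^(a+1)) := by
            rw [smul_mul_assoc, smul_smul, ← pow_add, mul_assoc, ← pow_succ]
            congr 2
            ring

lemma Xpow (m : ℕ) : pauliX ^ m = if Even m then 1 else pauliX := by
  induction m with
  | zero => simp
  | succ m ih =>
      rw [pow_succ, ih]
      rcases Nat.even_or_odd m with h | h
      · simp [h, Nat.even_add_one, h]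
      · simp [Nat.not_even_iff_odd.2 h, Nat.even_add_one, Nat.not_even_iff_odd.2 h, XX]

lemma Zpow (m : ℕ) : pauliZ ^ m = if Even m then 1 else pauliZ := by
  induction m with
  | zero => simp
  | succ m ih =>
      rw [pow_succ, ih]
      rcases Nat.even_or_odd m with h | h
      · simp [h, Nat.even_add_one, h]
      · simp [Nat.not_even_iff_odd.2 h, Nat.even_add_one, Nat.not_even_iff_odd.2 h, ZZ]

lemma trace_XZ : Matrix.trace (pauliX * pauliZ) = 0 := by
  simp [pauliX, pauliZ, Matrix.trace_fin_two, Matrix.mul_apply, Fin.sum_univ_two]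

lemma trace_X : Matrix.trace pauliX = 0 := by simp [pauliX, Matrix.trace_fin_two]
lemma trace_Z : Matrix.trace pauliZ = 0 := by simp [pauliZ, Matrix.trace_fin_two]

lemma trace_XFZG (F G : ℕ) :
    Matrix.trace (pauliX ^ F * pauliZ ^ G) =
      (1 + (-1 : ℂ) ^ F) * (1 + (-1 : ℂ) ^ G) / 2 := by
  rw [Xpow, Zpow]
  rcases Nat.even_or_odd F with hF | hF <;> rcases Nat.even_or_odd G with hG | hG <;>
    simp [hF, hG, Nat.not_even_iff_odd.2, hF.neg_one_pow, hG.neg_one_pow, trace_X, trace_Z,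
      trace_XZ, Matrix.trace_one]
  · norm_num


-- reindexing helpers
lemma sum_range_mul (K t : ℕ) (ψ : ℕ → ℂ) :
    ∑ c ∈ range (K * t), ψ c = ∑ j ∈ range t, ∑ k ∈ range K, ψ (K * j + k) := by
  induction t with
  | zero => simp
  | succ t ih =>
      have h : K * (t + 1) = K * t + K := by ring
      rw [h, Finset.sum_range_add, ih, Finset.sum_range_succ]

lemma prod_range_mul (K t : ℕ) (ψ : ℕ → ℂ) :
    ∏ c ∈ range (K * t), ψ c = ∏ j ∈ range t, ∏ k ∈ range K, ψ (K * j + k) := by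
  induction t with
  | zero => simp
  | succ t ih =>
      have h : K * (t + 1) = K * t + K := by ring
      rw [h, Finset.prod_range_add, ih, Finset.prod_range_succ]

variable {n : ℕ} (v : Fin (3 * n) → Bool)

def nb (n : ℕ) (v : Fin (3 * n) → Bool) (c : ℕ) : ℕ :=
  if h : c < 3 * n then (if v ⟨c, h⟩ then 1 else 0) else 0

def ax (n : ℕ) (v : Fin (3 * n) → Bool) (j : ℕ) : ℕ := nb n v (3 * j)
def ay (n : ℕ) (v : Fin (3 * n) → Bool) (j : ℕ) : ℕ := nb n v (3 * j + 1)
def az (n : ℕ) (v : Fin (3 * n) → Bool) (j : ℕ) : ℕ := nb n v (3 * j + 2)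
def ff (n : ℕ) (v : Fin (3 * n) → Bool) (j : ℕ) : ℕ := ax n v j + ay n v j
def gg (n : ℕ) (v : Fin (3 * n) → Bool) (j : ℕ) : ℕ := ay n v j + az n v j
def ww (n : ℕ) (v : Fin (3 * n) → Bool) (j : ℕ) : ℕ := ax n v j + ay n v j + az n v j
def FF (n : ℕ) (v : Fin (3 * n) → Bool) (t : ℕ) : ℕ := ∑ j ∈ range t, ff n v j
def GG (n : ℕ) (v : Fin (3 * n) → Bool) (t : ℕ) : ℕ := ∑ j ∈ range t, gg n v j
def YY (n : ℕ) (v : Fin (3 * n) → Bool) (t : ℕ) : ℕ := ∑ j ∈ range t, ay n v j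
def QQ (n : ℕ) (v : Fin (3 * n) → Bool) (t : ℕ) : ℕ := ∑ j ∈ range t, ff n v j * GG n v j

lemma nb_le_one (c : ℕ) : nb n v c ≤ 1 := by
  unfold nb; split <;> [skip; omega]; split <;> omega

-- the master visible-sum lemma
lemma sum_vis (φ : ℕ → ℂ) :
    (∑ i : Fin (3 * n), φ i.1 * (if v i then 1 else 0)) =
      ∑ j ∈ range n, (φ (3 * j) * (ax n v j : ℂ) + φ (3 * j + 1) * (ay n v j : ℂ)
        + φ (3 * j + 2) * (az n v j : ℂ)) := by
  have h1 : (∑ i : Fin (3 * n), φ i.1 * (if v i then 1 else 0)) =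
      ∑ i : Fin (3 * n), (fun c => φ c * (nb n v c : ℂ)) i.1 := by
    apply Finset.sum_congr rfl
    intro i _
    simp only [nb, dif_pos i.2, Fin.eta]
    split <;> simp
  rw [h1, Fin.sum_univ_eq_sum_range (fun c => φ c * (nb n v c : ℂ)) (3 * n),
    sum_range_mul 3 n]
  apply Finset.sum_congr rfl
  intro j _
  rw [show (3:ℕ) = 2 + 1 by rfl, Finset.sum_range_succ, Finset.sum_range_succ,
    Finset.sum_range_one]
  simp [ax, ay, az]

-- RBM parameters (ℕ-indexed versions)
def av : ℕ → ℂ := fun c =>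
  if c % 3 = 0 then L2 + PIC else if c % 3 = 1 then L2 + PIC + PIC / 2 else 0

def bv : ℕ → ℂ := fun u =>
  if u % 7 = 0 then PIC else if u % 7 = 1 then PIC - 2 * L2
  else if u % 7 = 2 then PIC - 3 * L2 else if u % 7 = 3 then L2
  else if u % 7 = 4 then PIC + L2 else 0

def Wv : ℕ → ℕ → ℂ := fun c u =>
  if u % 7 ≤ 2 then (if c / 3 = u / 7 then L2 else 0)
  else if u % 7 = 3 then (if c / 3 < u / 7 ∧ 1 ≤ c % 3 then PIC else 0)
  else if u % 7 = 4 then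
    (if c / 3 < u / 7 ∧ 1 ≤ c % 3 then PIC else 0)
      + (if c / 3 = u / 7 ∧ c % 3 ≤ 1 then -(2 * L2) else 0)
  else if u % 7 = 5 then (if u / 7 = 0 ∧ c % 3 ≤ 1 then PIC else 0)
  else (if u / 7 = 0 ∧ 1 ≤ c % 3 then PIC else 0)

def Sval (n : ℕ) (v : Fin (3 * n) → Bool) (j k : ℕ) : ℂ :=
  ∑ i : Fin (3 * n), Wv i.1 (7 * j + k) * (if v i then 1 else 0)

def Uval (n : ℕ) (v : Fin (3 * n) → Bool) (j k : ℕ) : ℂ :=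
  1 + Complex.exp (bv (7 * j + k) + Sval n v j k)

lemma sum_if_lt (t : ℕ → ℂ) {s : ℕ} (hs : s ≤ n) :
    ∑ j ∈ range n, (if j < s then t j else 0) = ∑ j ∈ range s, t j := by
  rw [← Finset.sum_subset (Finset.range_subset_range.2 hs)
    (fun x _ hx => if_neg (by simp at hx ⊢; omega))]
  apply Finset.sum_congr rfl
  intro j hj
  rw [if_pos (Finset.mem_range.1 hj)]

lemma S_val012 {j k : ℕ} (hj : j < n) (hk : k ≤ 2) :
    Sval n v j k = L2 * (ww n v j : ℂ) := by
  have hm : (7 * j + k) % 7 = k := by omega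
  have hd : (7 * j + k) / 7 = j := by omega
  rw [Sval, sum_vis v (fun c => Wv c (7*j+k))]
  have step : ∀ j' ∈ range n,
      (Wv (3 * j') (7*j+k) * (ax n v j' : ℂ) + Wv (3 * j' + 1) (7*j+k) * (ay n v j' : ℂ)
        + Wv (3 * j' + 2) (7*j+k) * (az n v j' : ℂ)) =
      (if j' = j then L2 * (ww n v j' : ℂ) else 0) := by
    intro j' _
    have e0 : (3 * j') / 3 = j' := by omega
    have e1 : (3 * j' + 1) / 3 = j' := by omega
    have e2 : (3 * j' + 2) / 3 = j' := by omega
    simp only [Wv, hm, hd, e0, e1, e2, if_pos hk]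
    by_cases h : j' = j
    · simp [h, ww]; push_cast; ring
    · simp [h]
  rw [Finset.sum_congr rfl step, Finset.sum_ite_eq' (range n) j
    (fun j' => L2 * (ww n v j' : ℂ)), if_pos (Finset.mem_range.2 hj)]

lemma S_val3 {j : ℕ} (hj : j < n) :
    Sval n v j 3 = PIC * (GG n v j : ℂ) := by
  have hm : (7 * j + 3) % 7 = 3 := by omega
  have hd : (7 * j + 3) / 7 = j := by omega
  rw [Sval, sum_vis v (fun c => Wv c (7*j+3))]
  have step : ∀ j' ∈ range n,
      (Wv (3 * j') (7*j+3) * (ax n v j' : ℂ) + Wv (3 * j' + 1) (7*j+3) * (ay n v j' : ℂ)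
        + Wv (3 * j' + 2) (7*j+3) * (az n v j' : ℂ)) =
      (if j' < j then PIC * (gg n v j' : ℂ) else 0) := by
    intro j' _
    have e0 : (3 * j') / 3 = j' := by omega
    have e1 : (3 * j' + 1) / 3 = j' := by omega
    have e2 : (3 * j' + 2) / 3 = j' := by omega
    have m0 : (3 * j') % 3 = 0 := by omega
    have m1 : (3 * j' + 1) % 3 = 1 := by omega
    have m2 : (3 * j' + 2) % 3 = 2 := by omega
    simp only [Wv, hm, hd, e0, e1, e2, m0, m1, m2]
    norm_num
    by_cases h : j' < j
    · simp [h, gg]; push_cast; ring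
    · simp [h]
  rw [Finset.sum_congr rfl step, sum_if_lt _ (le_of_lt hj), GG]
  rw [Nat.cast_sum, Finset.mul_sum]


lemma S_val4 {j : ℕ} (hj : j < n) :
    Sval n v j 4 = PIC * (GG n v j : ℂ) - 2 * L2 * (ff n v j : ℂ) := by
  have hm : (7 * j + 4) % 7 = 4 := by omega
  have hd : (7 * j + 4) / 7 = j := by omega
  rw [Sval, sum_vis v (fun c => Wv c (7*j+4))]
  have step : ∀ j' ∈ range n,
      (Wv (3 * j') (7*j+4) * (ax n v j' : ℂ) + Wv (3 * j' + 1) (7*j+4) * (ay n v j' : ℂ)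
        + Wv (3 * j' + 2) (7*j+4) * (az n v j' : ℂ)) =
      (if j' < j then PIC * (gg n v j' : ℂ) else 0)
        + (if j' = j then -(2 * L2) * (ff n v j' : ℂ) else 0) := by
    intro j' _
    have e0 : (3 * j') / 3 = j' := by omega
    have e1 : (3 * j' + 1) / 3 = j' := by omega
    have e2 : (3 * j' + 2) / 3 = j' := by omega
    have m0 : (3 * j') % 3 = 0 := by omega
    have m1 : (3 * j' + 1) % 3 = 1 := by omega
    have m2 : (3 * j' + 2) % 3 = 2 := by omega
    simp only [Wv, hm, hd, e0, e1, e2, m0, m1, m2]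
    norm_num
    by_cases h : j' < j
    · have h' : j' ≠ j := by omega
      simp [h, h', gg]
      push_cast
      ring
    · by_cases h' : j' = j
      · simp [h, h', ff]
        push_cast
        ring
      · simp [h, h']
  rw [Finset.sum_congr rfl step, Finset.sum_add_distrib,
    sum_if_lt _ (le_of_lt hj),
    Finset.sum_ite_eq' (range n) j (fun j' => -(2*L2) * (ff n v j' : ℂ)),
    if_pos (Finset.mem_range.2 hj), GG, Nat.cast_sum, Finset.mul_sum]
  ring

lemma S_val5 {j : ℕ} :
    Sval n v j 5 = if j = 0 then PIC * (FF n v n : ℂ) else 0 := by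
  have hm : (7 * j + 5) % 7 = 5 := by omega
  have hd : (7 * j + 5) / 7 = j := by omega
  rw [Sval, sum_vis v (fun c => Wv c (7*j+5))]
  have step : ∀ j' ∈ range n,
      (Wv (3 * j') (7*j+5) * (ax n v j' : ℂ) + Wv (3 * j' + 1) (7*j+5) * (ay n v j' : ℂ)
        + Wv (3 * j' + 2) (7*j+5) * (az n v j' : ℂ)) =
      (if j = 0 then PIC * (ff n v j' : ℂ) else 0) := by
    intro j' _
    have m0 : (3 * j') % 3 = 0 := by omega
    have m1 : (3 * j' + 1) % 3 = 1 := by omega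
    have m2 : (3 * j' + 2) % 3 = 2 := by omega
    simp only [Wv, hm, hd, m0, m1, m2]
    norm_num
    by_cases h : j = 0
    · simp [h, ff]
      push_cast
      ring
    · simp [h]
  rw [Finset.sum_congr rfl step]
  by_cases h : j = 0
  · simp only [h, if_true, FF, Nat.cast_sum, Finset.mul_sum]
  · simp [h]

lemma S_val6 {j : ℕ} :
    Sval n v j 6 = if j = 0 then PIC * (GG n v n : ℂ) else 0 := by
  have hm : (7 * j + 6) % 7 = 6 := by omega
  have hd : (7 * j + 6) / 7 = j := by omega
  rw [Sval, sum_vis v (fun c => Wv c (7*j+6))]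
  have step : ∀ j' ∈ range n,
      (Wv (3 * j') (7*j+6) * (ax n v j' : ℂ) + Wv (3 * j' + 1) (7*j+6) * (ay n v j' : ℂ)
        + Wv (3 * j' + 2) (7*j+6) * (az n v j' : ℂ)) =
      (if j = 0 then PIC * (gg n v j' : ℂ) else 0) := by
    intro j' _
    have m0 : (3 * j') % 3 = 0 := by omega
    have m1 : (3 * j' + 1) % 3 = 1 := by omega
    have m2 : (3 * j' + 2) % 3 = 2 := by omega
    simp only [Wv, hm, hd, m0, m1, m2]
    norm_num
    by_cases h : j = 0
    · simp [h, gg]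
      push_cast
      ring
    · simp [h]
  rw [Finset.sum_congr rfl step]
  by_cases h : j = 0
  · simp only [h, if_true, GG, Nat.cast_sum, Finset.mul_sum]
  · simp [h]


lemma bv0 {j : ℕ} : bv (7 * j + 0) = PIC := by
  have : (7 * j + 0) % 7 = 0 := by omega
  simp [bv, this]
lemma bv1 {j : ℕ} : bv (7 * j + 1) = PIC - 2 * L2 := by
  have : (7 * j + 1) % 7 = 1 := by omega
  simp [bv, this]
lemma bv2 {j : ℕ} : bv (7 * j + 2) = PIC - 3 * L2 := by
  have : (7 * j + 2) % 7 = 2 := by omega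
  simp [bv, this]
lemma bv3 {j : ℕ} : bv (7 * j + 3) = L2 := by
  have : (7 * j + 3) % 7 = 3 := by omega
  simp [bv, this]
lemma bv4 {j : ℕ} : bv (7 * j + 4) = PIC + L2 := by
  have : (7 * j + 4) % 7 = 4 := by omega
  simp [bv, this]
lemma bv5 {j : ℕ} : bv (7 * j + 5) = 0 := by
  have : (7 * j + 5) % 7 = 5 := by omega
  simp [bv, this]
lemma bv6 {j : ℕ} : bv (7 * j + 6) = 0 := by
  have : (7 * j + 6) % 7 = 6 := by omega
  simp [bv, this]

lemma U_val0 {j : ℕ} (hj : j < n) : Uval n v j 0 = 1 - 2 ^ (ww n v j) := by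
  rw [Uval, S_val012 v hj (by norm_num), bv0, Complex.exp_add, exp_PIC, exp_L2_nat]
  ring

lemma U_val1 {j : ℕ} (hj : j < n) : Uval n v j 1 = 1 - 2 ^ (ww n v j) / 4 := by
  rw [Uval, S_val012 v hj (by norm_num), bv1]
  have : PIC - 2 * L2 + L2 * (ww n v j : ℂ) = PIC + L2 * (ww n v j : ℂ) - L2 * (2:ℕ) := by
    push_cast; ring
  rw [this, Complex.exp_sub, Complex.exp_add, exp_PIC, exp_L2_nat, exp_L2_nat]
  norm_num
  ring

lemma U_val2 {j : ℕ} (hj : j < n) : Uval n v j 2 = 1 - 2 ^ (ww n v j) / 8 := by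
  rw [Uval, S_val012 v hj (by norm_num), bv2]
  have : PIC - 3 * L2 + L2 * (ww n v j : ℂ) = PIC + L2 * (ww n v j : ℂ) - L2 * (3:ℕ) := by
    push_cast; ring
  rw [this, Complex.exp_sub, Complex.exp_add, exp_PIC, exp_L2_nat, exp_L2_nat]
  norm_num
  ring

lemma U_val3 {j : ℕ} (hj : j < n) :
    Uval n v j 3 = 1 + 2 * (-1 : ℂ) ^ (GG n v j) := by
  rw [Uval, S_val3 v hj, bv3, Complex.exp_add, exp_L2, exp_PIC_nat]

lemma U_val4 {j : ℕ} (hj : j < n) :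
    Uval n v j 4 = 1 - 2 * (-1 : ℂ) ^ (GG n v j) / 4 ^ (ff n v j) := by
  rw [Uval, S_val4 v hj, bv4]
  have : PIC + L2 + (PIC * (GG n v j : ℂ) - 2 * L2 * (ff n v j : ℂ))
      = (PIC + (L2 + PIC * (GG n v j : ℂ))) - L2 * ((2 * ff n v j : ℕ) : ℂ) := by
    push_cast; ring
  rw [this, Complex.exp_sub, Complex.exp_add, Complex.exp_add, exp_PIC, exp_L2,
    exp_PIC_nat, exp_L2_nat, pow_mul]
  norm_num
  ring

lemma U_val5 {j : ℕ} :
    Uval n v j 5 = if j = 0 then 1 + (-1 : ℂ) ^ (FF n v n) else 2 := by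
  rw [Uval, S_val5 v, bv5]
  by_cases h : j = 0
  · simp only [h, if_true, zero_add, exp_PIC_nat]
  · simp [h, Complex.exp_zero]
    norm_num

lemma U_val6 {j : ℕ} :
    Uval n v j 6 = if j = 0 then 1 + (-1 : ℂ) ^ (GG n v n) else 2 := by
  rw [Uval, S_val6 v, bv6]
  by_cases h : j = 0
  · simp only [h, if_true, zero_add, exp_PIC_nat]
  · simp [h, Complex.exp_zero]
    norm_num

lemma ff_le_one {j : ℕ} (hw : ww n v j = 1) : ff n v j ≤ 1 := by
  unfold ww at hw; unfold ff; omega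

lemma site_prod_valid {j : ℕ} (hj : j < n) (hw : ww n v j = 1) :
    ∏ k ∈ range 7, Uval n v j k =
      (9/8 : ℂ) * (-2⁻¹ : ℂ) ^ (ff n v j) * (-1 : ℂ) ^ (ff n v j * GG n v j) *
        (if j = 0 then (1 + (-1 : ℂ) ^ (FF n v n)) * (1 + (-1 : ℂ) ^ (GG n v n))
          else 4) := by
  have hexp : ∏ k ∈ range 7, Uval n v j k = Uval n v j 0 * Uval n v j 1 * Uval n v j 2
      * Uval n v j 3 * Uval n v j 4 * Uval n v j 5 * Uval n v j 6 := by
    simp [Finset.prod_range_succ]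
  rw [hexp]
  rw [U_val0 v hj, U_val1 v hj, U_val2 v hj, U_val3 v hj, U_val4 v hj, U_val5 v, U_val6 v, hw]
  have hff : ff n v j = 0 ∨ ff n v j = 1 := by have := ff_le_one v hw; omega
  have e2 : ((-1:ℂ) ^ (GG n v j)) = 1 ∨ ((-1:ℂ) ^ (GG n v j)) = -1 := by
    rcases Nat.even_or_odd (GG n v j) with hG | hG
    · exact Or.inl hG.neg_one_pow
    · exact Or.inr hG.neg_one_pow
  rcases hff with h | h <;> rw [h] <;>
    simp only [pow_zero, pow_one, Nat.zero_mul, Nat.one_mul] <;>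
    rcases e2 with he | he <;> rw [he] <;>
    by_cases hj0 : j = 0 <;>
    first
      | (simp only [hj0, if_true]; ring1)
      | (simp only [hj0, if_false, ite_false]; ring1)

lemma site_prod_invalid {j : ℕ} (hj : j < n) (hw : ww n v j ≠ 1) :
    ∏ k ∈ range 7, Uval n v j k = 0 := by
  have hle : ww n v j ≤ 3 := by
    have h0 := nb_le_one v (3 * j)
    have h1 := nb_le_one v (3 * j + 1)
    have h2 := nb_le_one v (3 * j + 2)
    unfold ww ax ay az
    omega
  have : ww n v j = 0 ∨ ww n v j = 2 ∨ ww n v j = 3 := by omega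
  rcases this with h | h | h
  · exact Finset.prod_eq_zero (Finset.mem_range.2 (by norm_num : (0:ℕ) < 7))
      (by rw [U_val0 v hj, h]; norm_num)
  · exact Finset.prod_eq_zero (Finset.mem_range.2 (by norm_num : (1:ℕ) < 7))
      (by rw [U_val1 v hj, h]; norm_num)
  · exact Finset.prod_eq_zero (Finset.mem_range.2 (by norm_num : (2:ℕ) < 7))
      (by rw [U_val2 v hj, h]; norm_num)

lemma exp_bias :
    Complex.exp (∑ i : Fin (3 * n), av i.1 * (if v i then 1 else 0)) =
      ∏ j ∈ range n, ((-2 : ℂ) ^ (ax n v j) * (-(2 * Complex.I)) ^ (ay n v j)) := by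
  rw [sum_vis v av]
  have step : ∀ j ∈ range n,
      (av (3 * j) * (ax n v j : ℂ) + av (3 * j + 1) * (ay n v j : ℂ)
        + av (3 * j + 2) * (az n v j : ℂ)) =
      ((L2 + PIC) * (ax n v j : ℂ) + (L2 + PIC + PIC / 2) * (ay n v j : ℂ)) := by
    intro j _
    have m0 : (3 * j) % 3 = 0 := by omega
    have m1 : (3 * j + 1) % 3 = 1 := by omega
    have m2 : (3 * j + 2) % 3 = 2 := by omega
    simp only [av, m0, m1, m2]
    norm_num
  rw [Finset.sum_congr rfl step, Complex.exp_sum]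
  apply Finset.prod_congr rfl
  intro j _
  rw [Complex.exp_add, exp_nat, exp_nat, Complex.exp_add, exp_L2, exp_PIC,
    Complex.exp_add, Complex.exp_add, exp_L2, exp_PIC, exp_half_PIC]
  norm_num

lemma hidden_prod :
    (∏ u : Fin (7 * n), (1 + Complex.exp (bv u.1
        + ∑ i : Fin (3 * n), Wv i.1 u.1 * (if v i then 1 else 0)))) =
      ∏ j ∈ range n, ∏ k ∈ range 7, Uval n v j k := by
  rw [Fin.prod_univ_eq_prod_range (fun u => 1 + Complex.exp (bv u
    + ∑ i : Fin (3 * n), Wv i.1 u * (if v i then 1 else 0))) (7 * n), prod_range_mul 7 n]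
  rfl

def bbit (n : ℕ) (v : Fin (3 * n) → Bool) (c : ℕ) : Bool :=
  if h : c < 3 * n then v ⟨c, h⟩ else false

lemma nb_eq_bbit {c : ℕ} (h : c < 3 * n) :
    nb n v c = if bbit n v c then 1 else 0 := by
  unfold nb bbit
  rw [dif_pos h, dif_pos h]

lemma akltMat_eq (b0 b1 b2 : Bool)
    (hw : (if b0 then 1 else 0) + (if b1 then 1 else 0) + (if b2 then 1 else 0) = 1) :
    akltMat b0 b1 b2 = (Complex.I ^ (if b1 then (1:ℕ) else 0)) •
      (pauliX ^ ((if b0 then (1:ℕ) else 0) + (if b1 then (1:ℕ) else 0)) *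
        pauliZ ^ ((if b1 then (1:ℕ) else 0) + (if b2 then (1:ℕ) else 0))) := by
  cases b0 <;> cases b1 <;> cases b2 <;> simp_all [akltMat, Y_eq]

def Mfun (n : ℕ) (v : Fin (3 * n) → Bool) (c : ℕ) : Matrix (Fin 2) (Fin 2) ℂ :=
  if c < n then akltMat (bbit n v (3 * c)) (bbit n v (3 * c + 1)) (bbit n v (3 * c + 2))
  else 1

lemma Mfun_valid {c : ℕ} (hc : c < n) (hw : ww n v c = 1) :
    Mfun n v c = (Complex.I ^ (ay n v c)) •
      (pauliX ^ (ff n v c) * pauliZ ^ (gg n v c)) := by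
  have h0 : 3 * c < 3 * n := by omega
  have h1 : 3 * c + 1 < 3 * n := by omega
  have h2 : 3 * c + 2 < 3 * n := by omega
  have hax : ax n v c = if bbit n v (3 * c) then 1 else 0 := nb_eq_bbit v h0
  have hay : ay n v c = if bbit n v (3 * c + 1) then 1 else 0 := nb_eq_bbit v h1
  have haz : az n v c = if bbit n v (3 * c + 2) then 1 else 0 := nb_eq_bbit v h2
  rw [Mfun, if_pos hc, akltMat_eq _ _ _ (by rw [← hax, ← hay, ← haz]; exact hw)]
  unfold ff gg
  rw [hax, hay, haz]

lemma YY_succ (t : ℕ) : YY n v (t + 1) = YY n v t + ay n v t := Finset.sum_range_succ _ _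
lemma FF_succ (t : ℕ) : FF n v (t + 1) = FF n v t + ff n v t := Finset.sum_range_succ _ _
lemma GG_succ (t : ℕ) : GG n v (t + 1) = GG n v t + gg n v t := Finset.sum_range_succ _ _
lemma QQ_succ (t : ℕ) : QQ n v (t + 1) = QQ n v t + ff n v t * GG n v t :=
  Finset.sum_range_succ _ _

lemma XZ_swap (F G f g : ℕ) :
    (pauliX ^ F * pauliZ ^ G) * (pauliX ^ f * pauliZ ^ g) =
      ((-1 : ℂ) ^ (G * f)) • (pauliX ^ (F + f) * pauliZ ^ (G + g)) := by
  calc (pauliX ^ F * pauliZ ^ G) * (pauliX ^ f * pauliZ ^ g)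
      = pauliX ^ F * ((pauliZ ^ G * pauliX ^ f) * pauliZ ^ g) := by
        simp only [mul_assoc]
    _ = pauliX ^ F * ((((-1 : ℂ) ^ (G * f)) • (pauliX ^ f * pauliZ ^ G)) * pauliZ ^ g) := by
        rw [Zpow_Xpow]
    _ = ((-1 : ℂ) ^ (G * f)) • (pauliX ^ (F + f) * pauliZ ^ (G + g)) := by
        rw [smul_mul_assoc, mul_smul_comm]
        congr 1
        rw [pow_add, pow_add]
        simp only [mul_assoc]

lemma list_prod_eq (Hval : ∀ j, j < n → ww n v j = 1) :
    ∀ t, t ≤ n →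
      ((List.range t).map (Mfun n v)).prod =
        (Complex.I ^ (YY n v t) * (-1 : ℂ) ^ (QQ n v t)) •
          (pauliX ^ (FF n v t) * pauliZ ^ (GG n v t)) := by
  intro t
  induction t with
  | zero => simp [YY, QQ, FF, GG]
  | succ t ih =>
      intro ht
      have ht' : t ≤ n := by omega
      have htn : t < n := by omega
      rw [List.prod_range_succ, ih ht', Mfun_valid v htn (Hval t htn)]
      rw [smul_mul_assoc, mul_smul_comm, smul_smul, XZ_swap, smul_smul]
      rw [YY_succ, FF_succ, GG_succ, QQ_succ]
      congr 1
      rw [pow_add, pow_add, mul_comm (GG n v t) (ff n v t)]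
      ring

lemma ww_eq_cond (j : Fin n) :
    ww n v j.1 = (if v ⟨3 * j.1, by have := j.2; omega⟩ then 1 else 0) +
      (if v ⟨3 * j.1 + 1, by have := j.2; omega⟩ then 1 else 0) +
      (if v ⟨3 * j.1 + 2, by have := j.2; omega⟩ then 1 else 0) := by
  have h0 : 3 * j.1 < 3 * n := by have := j.2; omega
  have h1 : 3 * j.1 + 1 < 3 * n := by have := j.2; omega
  have h2 : 3 * j.1 + 2 < 3 * n := by have := j.2; omega
  unfold ww ax ay az nb
  rw [dif_pos h0, dif_pos h1, dif_pos h2]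

lemma cond_iff :
    (∀ j : Fin n,
      ((if v ⟨3 * j.1, by have := j.2; omega⟩ then 1 else 0) +
        (if v ⟨3 * j.1 + 1, by have := j.2; omega⟩ then 1 else 0) +
        (if v ⟨3 * j.1 + 2, by have := j.2; omega⟩ then 1 else 0) : ℕ) = 1) ↔
    (∀ j, j < n → ww n v j = 1) := by
  constructor
  · intro H j hj
    exact (ww_eq_cond v ⟨j, hj⟩).trans (H ⟨j, hj⟩)
  · intro H j
    rw [← ww_eq_cond v j]
    exact H j.1 j.2

lemma prod_ite_site (hn : 1 ≤ n) (P : ℂ) :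
    (∏ j ∈ range n, (if j = 0 then P else 4)) = P * 4 ^ (n - 1) := by
  obtain ⟨n', rfl⟩ : ∃ n', n = n' + 1 := ⟨n - 1, by omega⟩
  rw [Finset.prod_range_succ']
  simp only [if_neg (Nat.succ_ne_zero _), if_pos rfl]
  rw [Finset.prod_const, Finset.card_range]
  simp [mul_comm]

lemma key_pow (x y : ℕ) :
    (-2 : ℂ) ^ x * (-(2 * Complex.I)) ^ y * (-2⁻¹ : ℂ) ^ (x + y) = Complex.I ^ y := by
  have h1 : ((-2 : ℂ) * -2⁻¹) = 1 := by norm_num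
  have h2 : ((-(2 * Complex.I)) * -2⁻¹) = Complex.I := by ring_nf
  calc (-2 : ℂ) ^ x * (-(2 * Complex.I)) ^ y * (-2⁻¹ : ℂ) ^ (x + y)
      = ((-2 : ℂ) * -2⁻¹) ^ x * ((-(2 * Complex.I)) * -2⁻¹) ^ y := by
        rw [pow_add, mul_pow, mul_pow]; ring
    _ = Complex.I ^ y := by rw [h1, h2, one_pow, one_mul]

lemma collapse (n : ℕ) :
    (1/2 : ℂ) * (8/9 : ℂ) ^ n * (1/4 : ℂ) ^ (n - 1) * ((9/8 : ℂ) ^ n * (4 : ℂ) ^ (n - 1))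
      = 1/2 := by
  have h1 : (8/9 : ℂ) ^ n * (9/8 : ℂ) ^ n = 1 := by
    rw [← mul_pow]; norm_num
  have h2 : (1/4 : ℂ) ^ (n-1) * (4 : ℂ) ^ (n-1) = 1 := by
    rw [← mul_pow]; norm_num
  calc (1/2 : ℂ) * (8/9 : ℂ) ^ n * (1/4 : ℂ) ^ (n - 1) * ((9/8:ℂ) ^ n * (4:ℂ) ^ (n - 1))
      = (1/2 : ℂ) * ((8/9 : ℂ) ^ n * (9/8 : ℂ) ^ n) * ((1/4 : ℂ) ^ (n-1) * (4:ℂ) ^ (n-1)) := by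
        ring
    _ = 1/2 := by rw [h1, h2]; ring

end
end AKLTaux

open AKLTaux in
theorem aklt_state_representable :
    ∃ C : ℕ, ∀ n : ℕ, 1 ≤ n → ∃ m ≤ C * n, RBMRepresentable (3 * n) m (akltAmp n) := by
  refine ⟨7, fun n hn => ⟨7 * n, le_rfl, ?_⟩⟩
  refine ⟨(1/2 : ℂ) * (8/9 : ℂ) ^ n * (1/4 : ℂ) ^ (n - 1),
    fun i => AKLTaux.av i.1, fun u => AKLTaux.bv u.1,
    fun i u => AKLTaux.Wv i.1 u.1, ?_, ?_⟩
  · exact mul_ne_zero (mul_ne_zero (by norm_num) (pow_ne_zero _ (by norm_num)))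
      (pow_ne_zero _ (by norm_num))
  intro v
  beta_reduce
  rw [AKLTaux.exp_bias v, AKLTaux.hidden_prod v]
  by_cases hval : ∀ j, j < n → ww n v j = 1
  · -- valid configuration
    unfold akltAmp
    rw [if_pos ((cond_iff v).mpr hval)]
    have hb : ∀ (c : ℕ) (h : c < 3 * n), bbit n v c = v ⟨c, h⟩ := by
      intro c h; unfold bbit; rw [dif_pos h]
    have hlist : ((List.finRange n).map fun j : Fin n =>
        akltMat (v ⟨3 * j.1, by have := j.2; omega⟩)
          (v ⟨3 * j.1 + 1, by have := j.2; omega⟩)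
          (v ⟨3 * j.1 + 2, by have := j.2; omega⟩)).prod
        = ((List.range n).map (Mfun n v)).prod := by
      congr 1
      rw [← (show (List.finRange n).map (fun i : Fin n => (i : ℕ)) = List.range n from
        List.ext_getElem (by simp) (by simp)), List.map_map]
      apply List.map_congr_left
      intro j _
      show _ = Mfun n v j.1
      rw [Mfun, if_pos j.2, hb (3 * j.1) (by have := j.2; omega),
        hb (3 * j.1 + 1) (by have := j.2; omega), hb (3 * j.1 + 2) (by have := j.2; omega)]
    rw [hlist, AKLTaux.list_prod_eq v hval n le_rfl, Matrix.trace_smul, AKLTaux.trace_XFZG,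
      smul_eq_mul]
    rw [mul_assoc ((1/2 : ℂ) * (8/9 : ℂ) ^ n * (1/4 : ℂ) ^ (n - 1)) _ _,
      ← Finset.prod_mul_distrib]
    have hsite : ∀ j ∈ Finset.range n,
        ((-2 : ℂ) ^ (ax n v j) * (-(2 * Complex.I)) ^ (ay n v j)) *
          (∏ k ∈ Finset.range 7, Uval n v j k) =
        (9/8 : ℂ) * Complex.I ^ (ay n v j) * (-1 : ℂ) ^ (ff n v j * GG n v j) *
          (if j = 0 then (1 + (-1 : ℂ) ^ (FF n v n)) * (1 + (-1 : ℂ) ^ (GG n v n))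
            else 4) := by
      intro j hj
      have hjn := Finset.mem_range.1 hj
      rw [AKLTaux.site_prod_valid v hjn (hval j hjn)]
      have key := AKLTaux.key_pow (ax n v j) (ay n v j)
      have hffdef : ff n v j = ax n v j + ay n v j := rfl
      rw [← hffdef] at key
      linear_combination ((9/8 : ℂ) * (-1 : ℂ) ^ (ff n v j * GG n v j) *
        (if j = 0 then (1 + (-1 : ℂ) ^ (FF n v n)) * (1 + (-1 : ℂ) ^ (GG n v n)) else 4)) * key
    rw [Finset.prod_congr rfl hsite]
    rw [Finset.prod_mul_distrib, Finset.prod_mul_distrib, Finset.prod_mul_distrib,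
      Finset.prod_const, Finset.card_range, Finset.prod_pow_eq_pow_sum,
      Finset.prod_pow_eq_pow_sum, AKLTaux.prod_ite_site hn]
    rw [show (∑ j ∈ Finset.range n, ay n v j) = YY n v n from rfl,
      show (∑ j ∈ Finset.range n, ff n v j * GG n v j) = QQ n v n from rfl]
    have hcol := AKLTaux.collapse n
    linear_combination (-(Complex.I ^ (YY n v n) * (-1 : ℂ) ^ (QQ n v n) *
      ((1 + (-1 : ℂ) ^ (FF n v n)) * (1 + (-1 : ℂ) ^ (GG n v n))))) * hcol
  · -- invalid configuration
    unfold akltAmp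
    rw [if_neg (fun H => hval ((cond_iff v).mp H))]
    push_neg at hval
    obtain ⟨j0, hj0, hw⟩ := hval
    rw [(Finset.prod_eq_zero (Finset.mem_range.2 hj0) (AKLTaux.site_prod_invalid v hj0 hw) :
      (∏ j ∈ Finset.range n, ∏ k ∈ Finset.range 7, Uval n v j k) = 0)]
    ring
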